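/- arXiv:2212.00700 — 2 statements merged into one kernel-verified Lean document; each statement's English description precedes it below -/
import Mathlib

section
/- Let m(ζ) = (1 − γ − ζ − sqrt((ζ − γ − 1)^2 − 4γ)) / (2γζ) for ζ < 0 and 0 < γ < 1. Then the limit of m'(ζ) as ζ → 0⁻ equals 1/(1 − γ)^3. -/
open Filter

/-- The derivative of the Stieltjes transform of the Marchenko–Pastur law satisfies
`m'(ζ) → 1/(1-γ)^3` as `ζ → 0⁻`. -/
theorem mp_stieltjes_deriv_tendsto_at_zero (γ : ℝ) (hγ0 : 0 < γ) (hγ1 : γ < 1) :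
    Tendsto (deriv (fun ζ : ℝ =>
        (1 - γ - ζ - Real.sqrt ((ζ - γ - 1) ^ 2 - 4 * γ)) / (2 * γ * ζ)))
      (nhdsWithin 0 (Set.Iio 0)) (nhds (1 / (1 - γ) ^ 3)) := by
  have hγ1' : (0:ℝ) < 1 - γ := by linarith
  set m : ℝ → ℝ := fun ζ =>
    (1 - γ - ζ - Real.sqrt ((ζ - γ - 1) ^ 2 - 4 * γ)) / (2 * γ * ζ) with hm
  set g : ℝ → ℝ := fun ζ =>
    2 / (1 - γ - ζ + Real.sqrt ((ζ - γ - 1) ^ 2 - 4 * γ)) with hg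
  set h : ℝ → ℝ := fun ζ =>
    2 * (1 - (ζ - γ - 1) / Real.sqrt ((ζ - γ - 1) ^ 2 - 4 * γ)) /
      (1 - γ - ζ + Real.sqrt ((ζ - γ - 1) ^ 2 - 4 * γ)) ^ 2 with hh
  -- D ≥ (1-γ)² for ζ ≤ 0
  have hD : ∀ ζ : ℝ, ζ ≤ 0 → (1 - γ)^2 ≤ (ζ - γ - 1)^2 - 4*γ := by
    intro ζ hζ
    nlinarith [mul_nonneg (neg_nonneg.2 hζ) (by linarith : (0:ℝ) ≤ γ + 1)]
  have hsge : ∀ ζ : ℝ, ζ ≤ 0 → 1 - γ ≤ Real.sqrt ((ζ - γ - 1)^2 - 4*γ) := by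
    intro ζ hζ
    calc 1 - γ = Real.sqrt ((1-γ)^2) := (Real.sqrt_sq hγ1'.le).symm
    _ ≤ _ := Real.sqrt_le_sqrt (hD ζ hζ)
  -- deriv m = h on Iio 0
  have key : ∀ ζ : ℝ, ζ < 0 → deriv m ζ = h ζ := by
    intro ζ hζ
    have hDpos : 0 < (ζ - γ - 1)^2 - 4*γ :=
      lt_of_lt_of_le (by positivity) (hD ζ hζ.le)
    have hspos : 0 < Real.sqrt ((ζ - γ - 1)^2 - 4*γ) := Real.sqrt_pos.2 hDpos
    have hbpos : 0 < 1 - γ - ζ + Real.sqrt ((ζ - γ - 1)^2 - 4*γ) := by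
      have := hsge ζ hζ.le; linarith
    -- m = g near ζ
    have meq : ∀ x : ℝ, x < 0 → m x = g x := by
      intro x hx
      have hDx : 0 < (x - γ - 1)^2 - 4*γ :=
        lt_of_lt_of_le (by positivity) (hD x hx.le)
      have hbx : 0 < 1 - γ - x + Real.sqrt ((x - γ - 1)^2 - 4*γ) := by
        have := hsge x hx.le; linarith
      have hs2 : Real.sqrt ((x - γ - 1)^2 - 4*γ) ^ 2 = (x - γ - 1)^2 - 4*γ :=
        Real.sq_sqrt hDx.le
      simp only [hm, hg]
      rw [div_eq_div_iff (mul_ne_zero (by positivity) hx.ne) hbx.ne']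
      nlinarith [hs2]
    have hev : m =ᶠ[nhds ζ] g :=
      Filter.eventuallyEq_of_mem (Iio_mem_nhds hζ) (fun x hx => meq x hx)
    -- derivative of g at ζ
    have h1 : HasDerivAt (fun x : ℝ => (x - γ - 1)^2 - 4*γ) (2*(ζ - γ - 1)) ζ := by
      have hid : HasDerivAt (fun x : ℝ => x - γ - 1) 1 ζ := by
        simpa using ((hasDerivAt_id ζ).sub_const γ).sub_const 1
      have := (hid.pow 2).sub_const (4*γ)
      refine this.congr_deriv ?_
      ring
    have h2 : HasDerivAt (fun x : ℝ => Real.sqrt ((x - γ - 1)^2 - 4*γ))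
        ((ζ - γ - 1) / Real.sqrt ((ζ - γ - 1)^2 - 4*γ)) ζ := by
      have := (Real.hasDerivAt_sqrt hDpos.ne').comp ζ h1
      refine this.congr_deriv ?_
      field_simp
    have h3 : HasDerivAt (fun x : ℝ => 1 - γ - x + Real.sqrt ((x - γ - 1)^2 - 4*γ))
        (-1 + (ζ - γ - 1) / Real.sqrt ((ζ - γ - 1)^2 - 4*γ)) ζ := by
      have hid : HasDerivAt (fun x : ℝ => 1 - γ - x) (-1) ζ := by
        simpa using (hasDerivAt_id ζ).const_sub (1 - γ)
      exact hid.add h2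
    have h4 : HasDerivAt g (h ζ) ζ := by
      have := (hasDerivAt_const ζ (2:ℝ)).div h3 hbpos.ne'
      refine this.congr_deriv ?_
      simp only [hh]
      field_simp
      ring
    calc deriv m ζ = deriv g ζ := hev.deriv_eq
    _ = h ζ := h4.deriv
  -- continuity of h at 0 and its value
  have hs0 : Real.sqrt (((0:ℝ) - γ - 1)^2 - 4*γ) = 1 - γ := by
    rw [show ((0:ℝ) - γ - 1)^2 - 4*γ = (1-γ)^2 by ring, Real.sqrt_sq hγ1'.le]
  have hsc : ContinuousAt (fun x : ℝ => Real.sqrt ((x - γ - 1)^2 - 4*γ)) 0 :=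
    (Real.continuous_sqrt.comp (by continuity)).continuousAt
  have hcont : ContinuousAt h 0 := by
    apply ContinuousAt.div
    · exact continuousAt_const.mul (continuousAt_const.sub
        ((((continuousAt_id.sub continuousAt_const).sub continuousAt_const).div hsc
          (by rw [hs0]; exact hγ1'.ne'))))
    · exact ((continuousAt_const.sub continuousAt_id).add hsc).pow 2
    · rw [hs0]; exact pow_ne_zero 2 (by linarith)
  have hval : h 0 = 1 / (1 - γ)^3 := by
    simp only [hh, hs0]
    rw [div_eq_div_iff (pow_ne_zero 2 (by linarith)) (pow_ne_zero 3 (by linarith))]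
    field_simp
    ring
  have : Tendsto h (nhdsWithin 0 (Set.Iio 0)) (nhds (1 / (1 - γ)^3)) := by
    rw [← hval]
    exact hcont.continuousWithinAt.tendsto
  refine this.congr' ?_
  filter_upwards [self_mem_nhdsWithin] with x hx
  exact (key x hx).symm
end

section
/- For 0 < γ < 1, the integral of 1/s^2 against the Marchenko–Pastur law with ratio γ equals 1/(1 − γ)^3. -/
open Real Set

set_option maxHeartbeats 1000000

lemma mp_aux (g : ℝ) (hg0 : 0 < g) (hg1 : g < 1) :
    ∫ s in ((1 - g) ^ 2)..((1 + g) ^ 2),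
      (1 / s ^ 2) * (Real.sqrt (((1 + g) ^ 2 - s) * (s - (1 - g) ^ 2)) /
        (2 * Real.pi * g ^ 2 * s)) = 1 / (1 - g ^ 2) ^ 3 := by
  have h1g : 0 < 1 - g := by linarith
  have hq : 0 < 1 - g ^ 2 := by nlinarith
  have ha : (0:ℝ) < (1 - g) ^ 2 := by positivity
  have hab : (1 - g) ^ 2 ≤ (1 + g) ^ 2 := by nlinarith
  set a := (1 - g) ^ 2 with ha_def
  set b := (1 + g) ^ 2 with hb_def
  set C := 1 / (2 * Real.pi * g ^ 2) with hC_def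
  set μ := 2 * g ^ 2 / (1 - g ^ 2) ^ 3 with hμ_def
  set F : ℝ → ℝ := fun s => C * (Real.sqrt ((b - s) * (s - a)) *
      ((2 * (1 + g ^ 2)) / (4 * (1 - g ^ 2) ^ 2 * s) - 1 / (2 * s ^ 2)) +
      μ * Real.arcsin ((2 * (1 + g ^ 2) * s - 2 * (1 - g ^ 2) ^ 2) / (4 * g * s))) with hF_def
  have hs0 : ∀ s ∈ Set.Icc a b, s ≠ 0 := fun s hs => by nlinarith [hs.1]
  have key := intervalIntegral.integral_eq_sub_of_hasDerivAt_of_le hab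
    (f := F) (f' := fun s => (1 / s ^ 2) *
      (Real.sqrt ((b - s) * (s - a)) / (2 * Real.pi * g ^ 2 * s)))
    ?_ ?_ ?_
  · rw [key]
    have e1 : (b - b) * (b - a) = 0 := by ring
    have e2 : (b - a) * (a - a) = 0 := by ring
    have argb : (2 * (1 + g ^ 2) * b - 2 * (1 - g ^ 2) ^ 2) / (4 * g * b) = 1 := by
      rw [hb_def]; field_simp; ring
    have arga : (2 * (1 + g ^ 2) * a - 2 * (1 - g ^ 2) ^ 2) / (4 * g * a) = -1 := by
      rw [ha_def]; field_simp; ring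
    rw [hF_def]
    simp only [e1, e2, argb, arga, Real.sqrt_zero, Real.arcsin_one, Real.arcsin_neg_one,
      zero_mul, zero_add]
    rw [hC_def, hμ_def]
    have hπ := Real.pi_ne_zero
    field_simp
    ring
  · -- continuity
    apply ContinuousOn.mul continuousOn_const
    apply ContinuousOn.add
    · apply ContinuousOn.mul
      · exact (Real.continuous_sqrt.comp (by continuity : Continuous fun s : ℝ => (b - s) * (s - a))).continuousOn
      · apply ContinuousOn.sub
        · exact continuousOn_const.div
            (by continuity : Continuous fun s : ℝ => 4 * (1 - g ^ 2) ^ 2 * s).continuousOn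
            (fun s hs => by have := hs0 s hs; positivity)
        · exact continuousOn_const.div
            (by continuity : Continuous fun s : ℝ => 2 * s ^ 2).continuousOn
            (fun s hs => by have := hs0 s hs; positivity)
    · exact continuousOn_const.mul (Real.continuous_arcsin.comp_continuousOn
        ((by continuity : Continuous fun s : ℝ => 2 * (1 + g ^ 2) * s - 2 * (1 - g ^ 2) ^ 2).continuousOn.div
          (by continuity : Continuous fun s : ℝ => 4 * g * s).continuousOn
          (fun s hs => by have := hs0 s hs; positivity)))
  · -- derivative
    intro x hx
    have hx0 : 0 < x := lt_trans ha hx.1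
    have hbx : 0 < b - x := by linarith [hx.2]
    have hxa : 0 < x - a := by linarith [hx.1]
    have hinner : 0 < (b - x) * (x - a) := mul_pos hbx hxa
    set r := Real.sqrt ((b - x) * (x - a)) with hr_def
    have hr : 0 < r := Real.sqrt_pos.2 hinner
    have hr2 : r ^ 2 = (b - x) * (x - a) := Real.sq_sqrt hinner.le
    -- sqrt part derivative
    have hd1 : HasDerivAt (fun s => (b - s) * (s - a)) (a + b - 2 * x) x := by
      have h := ((hasDerivAt_id x).const_sub b).mul ((hasDerivAt_id x).sub_const a)
      convert h using 1 <;> (try rfl) <;> (try simp only [id_eq]) <;> ring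
    have hd2 : HasDerivAt (fun s => Real.sqrt ((b - s) * (s - a)))
        (1 / (2 * r) * (a + b - 2 * x)) x := by
      exact (Real.hasDerivAt_sqrt (ne_of_gt hinner)).comp x hd1
    -- rational part derivative
    have hne1 : 4 * (1 - g ^ 2) ^ 2 * x ≠ 0 := by positivity
    have hne2 : 2 * x ^ 2 ≠ 0 := by positivity
    have hu1 : HasDerivAt (fun s : ℝ => 4 * (1 - g ^ 2) ^ 2 * s) (4 * (1 - g ^ 2) ^ 2) x := by
      have h := (hasDerivAt_id x).const_mul (4 * (1 - g ^ 2) ^ 2)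
      convert h using 1 <;> (try rfl) <;> (try simp only [id_eq]) <;> ring
    have hu2 : HasDerivAt (fun s : ℝ => 2 * s ^ 2) (2 * (2 * x)) x := by
      have h := (hasDerivAt_pow 2 x).const_mul 2
      convert h using 1 <;> (try rfl) <;> (try simp only [id_eq]) <;> ring
    have hd3 : HasDerivAt (fun s => (2 * (1 + g ^ 2)) / (4 * (1 - g ^ 2) ^ 2 * s) - 1 / (2 * s ^ 2))
        ((0 * (4 * (1 - g ^ 2) ^ 2 * x) - (2 * (1 + g ^ 2)) * (4 * (1 - g ^ 2) ^ 2)) /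
          (4 * (1 - g ^ 2) ^ 2 * x) ^ 2 -
         (0 * (2 * x ^ 2) - 1 * (2 * (2 * x))) / (2 * x ^ 2) ^ 2) x := by
      exact ((hasDerivAt_const x _).div hu1 hne1).sub ((hasDerivAt_const x _).div hu2 hne2)
    have hd4 := hd2.mul hd3
    -- arcsin part
    have hne3 : 4 * g * x ≠ 0 := by positivity
    have hnum : HasDerivAt (fun s : ℝ => 2 * (1 + g ^ 2) * s - 2 * (1 - g ^ 2) ^ 2)
        (2 * (1 + g ^ 2)) x := by
      have h := ((hasDerivAt_id x).const_mul (2 * (1 + g ^ 2))).sub_const (2 * (1 - g ^ 2) ^ 2)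
      convert h using 1 <;> (try rfl) <;> (try simp only [id_eq]) <;> ring
    have hden : HasDerivAt (fun s : ℝ => 4 * g * s) (4 * g) x := by
      have h := (hasDerivAt_id x).const_mul (4 * g)
      convert h using 1 <;> (try rfl) <;> (try simp only [id_eq]) <;> ring
    have hdy := hnum.div hden hne3
    set y := (2 * (1 + g ^ 2) * x - 2 * (1 - g ^ 2) ^ 2) / (4 * g * x) with hy_def
    have hr2' : r ^ 2 = ((1 + g) ^ 2 - x) * (x - (1 - g) ^ 2) := hr2
    have hy2 : 1 - y ^ 2 = ((1 - g ^ 2) * r / (2 * g * x)) ^ 2 := by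
      have h : ((1 - g ^ 2) * r / (2 * g * x)) ^ 2 =
          (1 - g ^ 2) ^ 2 * (((1 + g) ^ 2 - x) * (x - (1 - g) ^ 2)) / (2 * g * x) ^ 2 := by
        rw [div_pow, mul_pow, hr2']
      rw [hy_def, h]
      field_simp
      ring
    have hypos : 0 < 1 - y ^ 2 := by
      rw [hy2]; positivity
    have hy1 : y ≠ 1 := fun h => by rw [h] at hypos; norm_num at hypos
    have hym1 : y ≠ -1 := fun h => by rw [h] at hypos; norm_num at hypos
    have hsq : Real.sqrt (1 - y ^ 2) = (1 - g ^ 2) * r / (2 * g * x) := by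
      rw [hy2, Real.sqrt_sq (by positivity)]
    have harc : HasDerivAt (fun s => Real.arcsin
        ((2 * (1 + g ^ 2) * s - 2 * (1 - g ^ 2) ^ 2) / (4 * g * s)))
        (1 / Real.sqrt (1 - y ^ 2) *
          ((2 * (1 + g ^ 2) * (4 * g * x) -
            (2 * (1 + g ^ 2) * x - 2 * (1 - g ^ 2) ^ 2) * (4 * g)) / (4 * g * x) ^ 2)) x := by
      exact (Real.hasDerivAt_arcsin hym1 hy1).comp x hdy
    have hF : HasDerivAt F (C * ((1 / (2 * r) * (a + b - 2 * x) *
        ((2 * (1 + g ^ 2)) / (4 * (1 - g ^ 2) ^ 2 * x) - 1 / (2 * x ^ 2)) +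
        Real.sqrt ((b - x) * (x - a)) *
        ((0 * (4 * (1 - g ^ 2) ^ 2 * x) - (2 * (1 + g ^ 2)) * (4 * (1 - g ^ 2) ^ 2)) /
          (4 * (1 - g ^ 2) ^ 2 * x) ^ 2 -
         (0 * (2 * x ^ 2) - 1 * (2 * (2 * x))) / (2 * x ^ 2) ^ 2)) +
        μ * (1 / Real.sqrt (1 - y ^ 2) *
          ((2 * (1 + g ^ 2) * (4 * g * x) -
            (2 * (1 + g ^ 2) * x - 2 * (1 - g ^ 2) ^ 2) * (4 * g)) / (4 * g * x) ^ 2)))) x :=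
      (hd4.add (harc.const_mul μ)).const_mul C
    apply hF.congr_deriv
    beta_reduce
    rw [hsq, ← hr_def]
    clear_value r
    simp only [hC_def, hμ_def, ha_def, hb_def]
    have hπ : Real.pi ≠ 0 := Real.pi_ne_zero
    have hx' : x ≠ 0 := ne_of_gt hx0
    have hg' : g ≠ 0 := ne_of_gt hg0
    have hq' : (1 : ℝ) - g ^ 2 ≠ 0 := ne_of_gt hq
    have hr' : r ≠ 0 := ne_of_gt hr
    have hr3 : r ^ 3 = (((1 + g) ^ 2 - x) * (x - (1 - g) ^ 2)) * r := by
      rw [pow_succ, hr2']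
    have hr4 : r ^ 4 = (((1 + g) ^ 2 - x) * (x - (1 - g) ^ 2)) ^ 2 := by
      rw [show (4:ℕ) = 2 * 2 from rfl, pow_mul, hr2']
    have hr5 : r ^ 5 = (((1 + g) ^ 2 - x) * (x - (1 - g) ^ 2)) ^ 2 * r := by
      rw [pow_succ, hr4]
    have hr6 : r ^ 6 = (((1 + g) ^ 2 - x) * (x - (1 - g) ^ 2)) ^ 3 := by
      rw [show (6:ℕ) = 2 * 3 from rfl, pow_mul, hr2']
    apply mul_left_cancel₀ hr'
    field_simp
    ring_nf
    simp only [hr6, hr5, hr4, hr3, hr2']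
    ring
  · -- integrability
    apply ContinuousOn.intervalIntegrable
    rw [Set.uIcc_of_le hab]
    apply ContinuousOn.mul
    · exact continuousOn_const.div
        (by continuity : Continuous fun s : ℝ => s ^ 2).continuousOn
        (fun s hs => by have := hs0 s hs; positivity)
    · exact (Real.continuous_sqrt.comp (by continuity : Continuous fun s : ℝ => (b - s) * (s - a))).continuousOn.div
        (by continuity : Continuous fun s : ℝ => 2 * Real.pi * g ^ 2 * s).continuousOn
        (fun s hs => by have := hs0 s hs; positivity)

/-- For `0 < γ < 1`, the integral of `1/s²` against the Marchenko–Pastur law with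
ratio `γ` equals `1/(1-γ)³`. -/
theorem mp_integral_inv_sq (γ : ℝ) (hγ0 : 0 < γ) (hγ1 : γ < 1) :
    ∫ s in ((1 - Real.sqrt γ) ^ 2)..((1 + Real.sqrt γ) ^ 2),
      (1 / s ^ 2) * (Real.sqrt (((1 + Real.sqrt γ) ^ 2 - s) * (s - (1 - Real.sqrt γ) ^ 2)) /
        (2 * Real.pi * γ * s)) = 1 / (1 - γ) ^ 3 := by
  have hg0 : 0 < Real.sqrt γ := Real.sqrt_pos.2 hγ0
  have hg1 : Real.sqrt γ < 1 := by
    nlinarith [Real.sq_sqrt hγ0.le, Real.sqrt_nonneg γ]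
  have hγ : Real.sqrt γ ^ 2 = γ := Real.sq_sqrt hγ0.le
  have := mp_aux (Real.sqrt γ) hg0 hg1
  rw [hγ] at this
  exact this
end
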